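/- arXiv:1403.6590 — 2 statements merged into one kernel-verified Lean document; each statement's English description precedes it below -/
import Mathlib

section
/- For a quantum state ρ and a substate σ (positive semidefinite with Tr σ ≤ 1) on a finite-dimensional Hilbert space with supp(ρ) ⊆ supp(σ), the relative entropy satisfies S(ρ‖σ) ≥ −2 log Tr(√ρ √σ). -/
open Matrix
open ComplexOrder
open scoped Classical

/-- positive semidefinite square root (junk value `0` off the PSD matrices) -/
noncomputable def msqrt {n : Type*} [Fintype n] [DecidableEq n] (A : Matrix n n ℂ) :
    Matrix n n ℂ :=
  if h : A.PosSemidef then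
    (h.1.eigenvectorUnitary : Matrix n n ℂ) * diagonal ((↑) ∘ Real.sqrt ∘ h.1.eigenvalues) *
      (star h.1.eigenvectorUnitary : Matrix n n ℂ) else 0

/-- matrix logarithm via the Hermitian functional calculus (junk value `0` otherwise) -/
noncomputable def mlog {n : Type*} [Fintype n] [DecidableEq n] (A : Matrix n n ℂ) :
    Matrix n n ℂ :=
  if h : A.IsHermitian then h.cfc Real.log else 0

/-- matrix logarithm taken on the support (eigenvalue `0` is sent to `0`) -/
noncomputable def mlog0 {n : Type*} [Fintype n] [DecidableEq n] (A : Matrix n n ℂ) :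
    Matrix n n ℂ :=
  if h : A.IsHermitian then h.cfc (fun x => if x = 0 then 0 else Real.log x) else 0

/-- matrix exponential -/
noncomputable def mexp {n : Type*} [Fintype n] [DecidableEq n] (A : Matrix n n ℂ) :
    Matrix n n ℂ :=
  NormedSpace.exp A

/-- Frobenius (Hilbert–Schmidt) norm `‖X‖₂ = (Tr (Xᴴ X))^(1/2)` -/
noncomputable def frob {n : Type*} [Fintype n] [DecidableEq n] (X : Matrix n n ℂ) : ℝ :=
  Real.sqrt (Matrix.trace (Xᴴ * X)).re

/-- trace norm `‖X‖₁ = Tr √(Xᴴ X)` -/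
noncomputable def trNorm {n : Type*} [Fintype n] [DecidableEq n] (X : Matrix n n ℂ) : ℝ :=
  (Matrix.trace (msqrt (Xᴴ * X))).re

/-- relative entropy `S(ρ‖σ) = Tr (ρ (log ρ − log σ))` -/
noncomputable def relEnt {n : Type*} [Fintype n] [DecidableEq n]
    (rho sigma : Matrix n n ℂ) : ℝ :=
  (Matrix.trace (rho * (mlog rho - mlog sigma))).re

/-- relative entropy with logarithms taken on the support -/
noncomputable def relEnt0 {n : Type*} [Fintype n] [DecidableEq n]
    (rho sigma : Matrix n n ℂ) : ℝ :=
  (Matrix.trace (rho * (mlog0 rho - mlog0 sigma))).re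

/-- von Neumann entropy `S(τ) = −Tr (τ log τ)` -/
noncomputable def vN {n : Type*} [Fintype n] [DecidableEq n] (rho : Matrix n n ℂ) : ℝ :=
  -(Matrix.trace (rho * mlog rho)).re

section Tripartite

variable {α β γ : Type*} [Fintype α] [DecidableEq α] [Fintype β] [DecidableEq β]
  [Fintype γ] [DecidableEq γ]

/-- partial trace over the `B` system: `ρ_AC` -/
noncomputable def ptrB (M : Matrix (α × β × γ) (α × β × γ) ℂ) : Matrix (α × γ) (α × γ) ℂ :=
  fun p q => ∑ b : β, M (p.1, b, p.2) (q.1, b, q.2)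

/-- partial trace over the `A` system: `ρ_BC` -/
noncomputable def ptrA (M : Matrix (α × β × γ) (α × β × γ) ℂ) : Matrix (β × γ) (β × γ) ℂ :=
  fun p q => ∑ a : α, M (a, p.1, p.2) (a, q.1, q.2)

/-- partial trace over the `A` and `B` systems: `ρ_C` -/
noncomputable def ptrAB (M : Matrix (α × β × γ) (α × β × γ) ℂ) : Matrix γ γ ℂ :=
  fun c c' => ∑ a : α, ∑ b : β, M (a, b, c) (a, b, c')

/-- embedding `X_AC ↦ X_AC ⊗ I_B` -/
def embAC (X : Matrix (α × γ) (α × γ) ℂ) : Matrix (α × β × γ) (α × β × γ) ℂ :=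
  fun p q => if p.2.1 = q.2.1 then X (p.1, p.2.2) (q.1, q.2.2) else 0

/-- embedding `X_BC ↦ I_A ⊗ X_BC` -/
def embBC (X : Matrix (β × γ) (β × γ) ℂ) : Matrix (α × β × γ) (α × β × γ) ℂ :=
  fun p q => if p.1 = q.1 then X p.2 q.2 else 0

/-- embedding `X_C ↦ I_A ⊗ I_B ⊗ X_C` -/
def embC (X : Matrix γ γ ℂ) : Matrix (α × β × γ) (α × β × γ) ℂ :=
  fun p q => if p.1 = q.1 ∧ p.2.1 = q.2.1 then X p.2.2 q.2.2 else 0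

/-- conditional mutual information `I(A:B|C)_ρ = S(ρ_AC)+S(ρ_BC)−S(ρ_ABC)−S(ρ_C)` -/
noncomputable def cmi (rho : Matrix (α × β × γ) (α × β × γ) ℂ) : ℝ :=
  vN (ptrB rho) + vN (ptrA rho) - vN rho - vN (ptrAB rho)

/-- the operator `exp(log σ_AC + log σ_BC − log σ_C)` -/
noncomputable def sigOp (sigma : Matrix (α × β × γ) (α × β × γ) ℂ) :
    Matrix (α × β × γ) (α × β × γ) ℂ :=
  mexp (embAC (mlog (ptrB sigma)) + embBC (mlog (ptrA sigma)) - embC (mlog (ptrAB sigma)))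

/-- the operator `exp(log ρ_AC + log ρ_BC)` -/
noncomputable def sigOp2 (sigma : Matrix (α × β × γ) (α × β × γ) ℂ) :
    Matrix (α × β × γ) (α × β × γ) ℂ :=
  mexp (embAC (mlog (ptrB sigma)) + embBC (mlog (ptrA sigma)))

end Tripartite


section AuxLemmas

lemma trace_diag_sandwich {n : Type*} [Fintype n] [DecidableEq n]
    (d e : n → ℂ) (W : Matrix n n ℂ) :
    (diagonal d * (W * (diagonal e * star W))).trace
      = ∑ i, ∑ j, d i * e j * (W i j * star (W i j)) := by
  rw [Matrix.trace]
  refine Finset.sum_congr rfl fun i _ => ?_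
  rw [Matrix.diag_apply, Matrix.diagonal_mul, Matrix.mul_apply, Finset.mul_sum]
  refine Finset.sum_congr rfl fun j _ => ?_
  rw [Matrix.diagonal_mul, Matrix.star_apply]
  ring

lemma trace_cfc_mul_cfc {n : Type*} [Fintype n] [DecidableEq n] {A B : Matrix n n ℂ}
    (hA : A.IsHermitian) (hB : B.IsHermitian) (f g : ℝ → ℝ) :
    (hA.cfc f * hB.cfc g).trace =
      ((∑ i, ∑ j, f (hA.eigenvalues i) * g (hB.eigenvalues j) *
        Complex.normSq ((star (hA.eigenvectorUnitary : Matrix n n ℂ) *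
          (hB.eigenvectorUnitary : Matrix n n ℂ)) i j)) : ℝ) := by
  set U := (hA.eigenvectorUnitary : Matrix n n ℂ) with hU
  set V := (hB.eigenvectorUnitary : Matrix n n ℂ) with hV
  set W := star U * V with hW
  have hstar : star W = star V * U := by rw [hW]; simp [Matrix.star_mul, mul_comm]
  rw [Matrix.IsHermitian.cfc, Matrix.IsHermitian.cfc]
  simp only [Unitary.conjStarAlgAut_apply, Unitary.coe_star]
  rw [show U * diagonal (RCLike.ofReal ∘ f ∘ hA.eigenvalues) * star U *
      (V * diagonal (RCLike.ofReal ∘ g ∘ hB.eigenvalues) * star V)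
      = U * ((diagonal (RCLike.ofReal ∘ f ∘ hA.eigenvalues)) * (star U * (V * ((diagonal
          (RCLike.ofReal ∘ g ∘ hB.eigenvalues)) * star V)))) from by
    simp only [← mul_assoc]]
  rw [Matrix.trace_mul_comm]
  rw [show (diagonal (RCLike.ofReal ∘ f ∘ hA.eigenvalues)) * (star U * (V * ((diagonal
          (RCLike.ofReal ∘ g ∘ hB.eigenvalues)) * star V))) * U
      = (diagonal (RCLike.ofReal ∘ f ∘ hA.eigenvalues)) * (W * ((diagonal
          (RCLike.ofReal ∘ g ∘ hB.eigenvalues)) * star W)) from by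
    rw [hstar, hW]; simp only [← mul_assoc]]
  rw [trace_diag_sandwich]
  push_cast
  refine Finset.sum_congr rfl fun i _ => Finset.sum_congr rfl fun j _ => ?_
  simp only [Function.comp_apply, RCLike.star_def, Complex.mul_conj, RCLike.ofReal_alg]
  norm_num

lemma classical_key {i : Type*} [Fintype i] (c p q : i → ℝ)
    (hc : ∀ k, 0 ≤ c k) (hp : ∀ k, 0 ≤ p k) (hq : ∀ k, 0 ≤ q k)
    (hsum : ∑ k, c k * p k = 1)
    (hac : ∀ k, q k = 0 → c k * p k = 0) :
    -2 * Real.log (∑ k, c k * (Real.sqrt (p k) * Real.sqrt (q k))) ≤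
      ∑ k, c k * p k *
        ((if p k = 0 then 0 else Real.log (p k)) - (if q k = 0 then 0 else Real.log (q k))) := by
  set s := Finset.univ.filter (fun k => c k * p k ≠ 0) with hs
  have hmem : ∀ k ∈ s, 0 < c k ∧ 0 < p k ∧ 0 < q k := by
    intro k hk
    rw [hs, Finset.mem_filter] at hk
    have hcp := hk.2
    have hc' : 0 < c k := lt_of_le_of_ne (hc k) (fun h => hcp (by rw [← h]; ring))
    have hp' : 0 < p k := lt_of_le_of_ne (hp k) (fun h => hcp (by rw [← h]; ring))
    have hq' : 0 < q k := lt_of_le_of_ne (hq k) (fun h => hcp (hac k h.symm))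
    exact ⟨hc', hp', hq'⟩
  have hw1 : ∑ k ∈ s, c k * p k = 1 := by
    rw [hs, Finset.sum_filter_ne_zero, hsum]
  set z : i → ℝ := fun k => Real.sqrt (q k) / Real.sqrt (p k) with hz
  have hzpos : ∀ k ∈ s, 0 < z k := fun k hk =>
    div_pos (Real.sqrt_pos.mpr (hmem k hk).2.2) (Real.sqrt_pos.mpr (hmem k hk).2.1)
  have hgm := Real.geom_mean_le_arith_mean_weighted s (fun k => c k * p k) z
    (fun k _ => mul_nonneg (hc k) (hp k)) hw1 (fun k hk => (hzpos k hk).le)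
  have hrhs : ∑ k ∈ s, c k * p k * z k = ∑ k ∈ s, c k * (Real.sqrt (p k) * Real.sqrt (q k)) := by
    refine Finset.sum_congr rfl fun k hk => ?_
    obtain ⟨_, hp', _⟩ := hmem k hk
    have h3 : Real.sqrt (p k) * Real.sqrt (p k) = p k := Real.mul_self_sqrt hp'.le
    rw [hz]
    field_simp
    linear_combination (-1 : ℝ) * h3
  set T := ∑ k, c k * (Real.sqrt (p k) * Real.sqrt (q k)) with hT
  have hsub : ∑ k ∈ s, c k * (Real.sqrt (p k) * Real.sqrt (q k)) ≤ T := by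
    rw [hT]
    refine Finset.sum_le_sum_of_subset_of_nonneg (Finset.filter_subset _ _) ?_
    intro k _ _
    exact mul_nonneg (hc k) (mul_nonneg (Real.sqrt_nonneg _) (Real.sqrt_nonneg _))
  have hprodpos : 0 < ∏ k ∈ s, z k ^ (c k * p k) :=
    Finset.prod_pos fun k hk => Real.rpow_pos_of_pos (hzpos k hk) _
  have hlog : Real.log (∏ k ∈ s, z k ^ (c k * p k)) ≤ Real.log T :=
    Real.log_le_log hprodpos (le_trans (hrhs ▸ hgm) hsub)
  have hlogprod : Real.log (∏ k ∈ s, z k ^ (c k * p k))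
      = ∑ k ∈ s, (c k * p k) * ((Real.log (q k) - Real.log (p k)) / 2) := by
    rw [Real.log_prod (fun k hk => (Real.rpow_pos_of_pos (hzpos k hk) _).ne')]
    refine Finset.sum_congr rfl fun k hk => ?_
    obtain ⟨_, hp', hq'⟩ := hmem k hk
    rw [Real.log_rpow (hzpos k hk), hz, Real.log_div (Real.sqrt_pos.mpr hq').ne'
      (Real.sqrt_pos.mpr hp').ne', Real.log_sqrt hq'.le, Real.log_sqrt hp'.le]
    ring
  have hfin : ∑ k, c k * p k *
        ((if p k = 0 then 0 else Real.log (p k)) - (if q k = 0 then 0 else Real.log (q k)))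
      = ∑ k ∈ s, (c k * p k) * (Real.log (p k) - Real.log (q k)) := by
    rw [← Finset.sum_subset (Finset.subset_univ s) (fun k _ hk => by
      have : c k * p k = 0 := by
        by_contra hne
        exact hk (by rw [hs]; exact Finset.mem_filter.mpr ⟨Finset.mem_univ k, hne⟩)
      rw [this, zero_mul])]
    refine Finset.sum_congr rfl fun k hk => ?_
    obtain ⟨_, hp', hq'⟩ := hmem k hk
    rw [if_neg hp'.ne', if_neg hq'.ne']
  rw [hfin]
  rw [hlogprod] at hlog
  have : ∑ k ∈ s, c k * p k * (Real.log (p k) - Real.log (q k))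
      = -2 * ∑ k ∈ s, (c k * p k) * ((Real.log (q k) - Real.log (p k)) / 2) := by
    rw [Finset.mul_sum]
    exact Finset.sum_congr rfl fun k _ => by ring
  rw [this]
  linarith

end AuxLemmas

theorem relEnt_ge_neg_two_log_fidelity {n : Type*} [Fintype n] [DecidableEq n]
    (rho sigma : Matrix n n ℂ) (hrho : rho.PosSemidef) (hrho1 : rho.trace = 1)
    (hsigma : sigma.PosSemidef) (hsigma1 : sigma.trace.re ≤ 1)
    (hsupp : ∀ v : n → ℂ, sigma *ᵥ v = 0 → rho *ᵥ v = 0) :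
    relEnt0 rho sigma ≥ -2 * Real.log (Matrix.trace (msqrt rho * msqrt sigma)).re := by
  have hA := hrho.1
  have hB := hsigma.1
  set U := (hA.eigenvectorUnitary : Matrix n n ℂ) with hU
  set V := (hB.eigenvectorUnitary : Matrix n n ℂ) with hV
  set W := star U * V with hW
  set p := hA.eigenvalues with hp
  set q := hB.eigenvalues with hq
  have hpnn : ∀ i, 0 ≤ p i := hrho.eigenvalues_nonneg
  have hqnn : ∀ j, 0 ≤ q j := hsigma.eigenvalues_nonneg
  have hUU : star U * U = 1 := Unitary.star_mul_self_of_mem hA.eigenvectorUnitary.2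
  have hVV : star V * V = 1 := Unitary.star_mul_self_of_mem hB.eigenvectorUnitary.2
  have hVV' : V * star V = 1 := Unitary.mul_star_self_of_mem hB.eigenvectorUnitary.2
  have hrho_id : rho = hA.cfc id := by
    rw [Matrix.IsHermitian.cfc]
    exact hA.spectral_theorem
  have hsigma_id : sigma = hB.cfc id := by
    rw [Matrix.IsHermitian.cfc]
    exact hB.spectral_theorem
  have hsq_rho : msqrt rho = hA.cfc Real.sqrt := by
    rw [msqrt, dif_pos hrho]; rfl
  have hsq_sigma : msqrt sigma = hB.cfc Real.sqrt := by
    rw [msqrt, dif_pos hsigma]; rfl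
  have hlog_rho : mlog0 rho = hA.cfc (fun x => if x = 0 then 0 else Real.log x) := by
    rw [mlog0, dif_pos hA]
  have hlog_sigma : mlog0 sigma = hB.cfc (fun x => if x = 0 then 0 else Real.log x) := by
    rw [mlog0, dif_pos hB]
  have htr : rho.trace = ((∑ i, p i : ℝ) : ℂ) := by
    conv_lhs => rw [hA.spectral_theorem, Unitary.conjStarAlgAut_apply]
    rw [Matrix.trace_mul_comm, ← mul_assoc, hUU, one_mul, Matrix.trace_diagonal]
    push_cast
    rfl
  have hpsum : ∑ i, p i = 1 := by
    have := htr.symm.trans hrho1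
    exact_mod_cast this
  have hWW : W * star W = 1 := by
    rw [hW]
    calc star U * V * star (star U * V) = star U * (V * star V) * U := by
          simp [Matrix.star_mul, mul_assoc]
      _ = 1 := by rw [hVV', mul_one, hUU]
  have hrow : ∀ i, ∑ j, Complex.normSq (W i j) = 1 := by
    intro i
    have h1 : (W * star W) i i = 1 := by rw [hWW]; simp
    rw [Matrix.mul_apply] at h1
    have h2 : ∀ j, W i j * star W j i = (Complex.normSq (W i j) : ℂ) := by
      intro j
      rw [Matrix.star_apply, RCLike.star_def, Complex.mul_conj]
    rw [Finset.sum_congr rfl fun j _ => h2 j] at h1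
    exact_mod_cast h1
  have hsupp2 : ∀ i j, q j = 0 → (p i : ℂ) * W i j = 0 := by
    intro i j hqj
    have hv : sigma *ᵥ (fun i => V i j) = 0 := by
      have h3 : (fun i => V i j) = V *ᵥ Pi.single j 1 := by ext i; simp
      rw [h3, Matrix.mulVec_mulVec]
      conv_lhs => rw [hB.spectral_theorem, Unitary.conjStarAlgAut_apply]
      rw [show (V * diagonal (RCLike.ofReal ∘ q) * star V) * V
          = V * diagonal (RCLike.ofReal ∘ q) from by
        rw [mul_assoc, hVV, mul_one]]
      rw [Matrix.mulVec_single]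
      ext i
      simp [Matrix.mul_diagonal, Function.comp, hqj]
    have hrv := hsupp _ hv
    have h3 : (fun i => V i j) = V *ᵥ Pi.single j 1 := by ext i; simp
    rw [h3, Matrix.mulVec_mulVec] at hrv
    have h4 : star U *ᵥ ((rho * V) *ᵥ Pi.single j 1) = 0 := by rw [hrv]; simp
    rw [Matrix.mulVec_mulVec] at h4
    have h5 : star U * (rho * V) = diagonal (RCLike.ofReal ∘ p) * W := by
      conv_lhs => rw [hrho_id, Matrix.IsHermitian.cfc, Unitary.conjStarAlgAut_apply]
      rw [hW]
      calc star U * (U * diagonal (RCLike.ofReal ∘ id ∘ p) * star U * V)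
          = (star U * U) * diagonal (RCLike.ofReal ∘ id ∘ p) * (star U * V) := by
            simp only [mul_assoc]
        _ = diagonal (RCLike.ofReal ∘ p) * (star U * V) := by rw [hUU, one_mul]; rfl
    rw [h5, Matrix.mulVec_single] at h4
    have h6 := congrFun h4 i
    simpa [Matrix.diagonal_mul] using h6
  set c : n → n → ℝ := fun i j => Complex.normSq (W i j) with hc
  have hcnn : ∀ i j, 0 ≤ c i j := fun i j => Complex.normSq_nonneg _
  -- trace computations
  have e1 : (rho * mlog0 rho).trace
      = ((∑ i, p i * (if p i = 0 then 0 else Real.log (p i)) : ℝ) : ℂ) := by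
    rw [hlog_rho, show rho * hA.cfc (fun x => if x = 0 then 0 else Real.log x)
        = hA.cfc id * hA.cfc (fun x => if x = 0 then 0 else Real.log x) from by
      rw [← hrho_id], trace_cfc_mul_cfc hA hA]
    norm_cast
    refine Finset.sum_congr rfl fun i _ => ?_
    rw [Finset.sum_eq_single i ?h1 ?h2]
    · simp [Unitary.star_mul_self, Matrix.one_apply, hp]
    · intro b _ hb
      simp [Unitary.star_mul_self, Matrix.one_apply, Ne.symm hb]
    · intro h
      exact absurd (Finset.mem_univ i) h
  have e2 : (rho * mlog0 sigma).trace
      = ((∑ i, ∑ j, p i * (if q j = 0 then 0 else Real.log (q j)) * c i j : ℝ) : ℂ) := by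
    rw [hlog_sigma, show rho * hB.cfc (fun x => if x = 0 then 0 else Real.log x)
        = hA.cfc id * hB.cfc (fun x => if x = 0 then 0 else Real.log x) from by
      rw [← hrho_id], trace_cfc_mul_cfc hA hB]
    norm_cast
  have e3 : (msqrt rho * msqrt sigma).trace
      = ((∑ i, ∑ j, Real.sqrt (p i) * Real.sqrt (q j) * c i j : ℝ) : ℂ) := by
    rw [hsq_rho, hsq_sigma, trace_cfc_mul_cfc hA hB]
  -- relEnt0 as a real double sum
  have hRE : relEnt0 rho sigma
      = (∑ i, p i * (if p i = 0 then 0 else Real.log (p i)))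
        - ∑ i, ∑ j, p i * (if q j = 0 then 0 else Real.log (q j)) * c i j := by
    rw [relEnt0, mul_sub, Matrix.trace_sub, e1, e2]
    rw [← Complex.ofReal_sub, Complex.ofReal_re]
  -- apply the classical bound on the product type
  have key := classical_key (i := n × n) (fun k => c k.1 k.2) (fun k => p k.1) (fun k => q k.2)
    (fun k => hcnn k.1 k.2) (fun k => hpnn k.1) (fun k => hqnn k.2)
    (by
      rw [Fintype.sum_prod_type]
      calc ∑ i, ∑ j, c i j * p i = ∑ i, p i * ∑ j, c i j := by
            refine Finset.sum_congr rfl fun i _ => ?_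
            rw [Finset.mul_sum]
            exact Finset.sum_congr rfl fun j _ => by ring
        _ = ∑ i, p i := by
            refine Finset.sum_congr rfl fun i _ => by rw [hrow i, mul_one]
        _ = 1 := hpsum)
    (by
      rintro ⟨i, j⟩ hqj
      show c i j * p i = 0
      have := hsupp2 i j hqj
      rcases mul_eq_zero.mp this with h | h
      · have h2 : p i = 0 := by exact_mod_cast h
        rw [h2, mul_zero]
      · have h2 : c i j = 0 := by rw [hc]; simp [h]
        rw [h2, zero_mul])
  rw [ge_iff_le, hRE, e3, Complex.ofReal_re]
  calc -2 * Real.log (∑ i, ∑ j, Real.sqrt (p i) * Real.sqrt (q j) * c i j)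
      = -2 * Real.log (∑ k : n × n, c k.1 k.2 *
          (Real.sqrt (p k.1) * Real.sqrt (q k.2))) := by
        rw [Fintype.sum_prod_type]
        congr 1
        refine congrArg Real.log (Finset.sum_congr rfl fun i _ =>
          Finset.sum_congr rfl fun j _ => by ring)
    _ ≤ ∑ k : n × n, c k.1 k.2 * p k.1 *
          ((if p k.1 = 0 then 0 else Real.log (p k.1))
            - (if q k.2 = 0 then 0 else Real.log (q k.2))) := key
    _ = (∑ i, p i * (if p i = 0 then 0 else Real.log (p i)))
        - ∑ i, ∑ j, p i * (if q j = 0 then 0 else Real.log (q j)) * c i j := by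
        rw [Fintype.sum_prod_type]
        have hstep : ∀ i, ∑ j, c i j * p i *
            ((if p i = 0 then 0 else Real.log (p i))
              - (if q j = 0 then 0 else Real.log (q j)))
            = p i * (if p i = 0 then 0 else Real.log (p i))
              - ∑ j, p i * (if q j = 0 then 0 else Real.log (q j)) * c i j := by
          intro i
          rw [show (∑ j, c i j * p i *
              ((if p i = 0 then 0 else Real.log (p i))
                - (if q j = 0 then 0 else Real.log (q j))))
              = ∑ j, (c i j * (p i * (if p i = 0 then 0 else Real.log (p i)))
                - p i * (if q j = 0 then 0 else Real.log (q j)) * c i j) from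
            Finset.sum_congr rfl fun j _ => by ring]
          rw [Finset.sum_sub_distrib, ← Finset.sum_mul, hrow i, one_mul]
        rw [Finset.sum_congr rfl fun i _ => hstep i, Finset.sum_sub_distrib]
end

section
/- For a state ρ and a substate σ on a finite-dimensional Hilbert space, ‖√ρ − √σ‖₂² ≥ (1/4)‖ρ − σ‖₁². -/
open Matrix
open ComplexOrder
open scoped Classical

section Helpers

variable {n : Type*} [Fintype n] [DecidableEq n]

omit [DecidableEq n] in
private lemma trace_conjT_mul_re (A : Matrix n n ℂ) :
    (Matrix.trace (Aᴴ * A)).re = ∑ j, ∑ i, ‖A i j‖ ^ 2 := by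
  simp only [Matrix.trace, Matrix.diag, Matrix.mul_apply, Matrix.conjTranspose_apply,
    Complex.re_sum]
  congr 1; ext j; congr 1; ext i
  rw [Complex.star_def, ← Complex.normSq_eq_conj_mul_self, Complex.ofReal_re,
    ← Complex.sq_norm]

omit [DecidableEq n] in
private lemma trace_conjT_mul_re_nonneg (A : Matrix n n ℂ) :
    0 ≤ (Matrix.trace (Aᴴ * A)).re := by
  rw [trace_conjT_mul_re]
  exact Finset.sum_nonneg fun j _ => Finset.sum_nonneg fun i _ => sq_nonneg _

private lemma frob_nonneg (A : Matrix n n ℂ) : 0 ≤ frob A := Real.sqrt_nonneg _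

private lemma frob_sq (A : Matrix n n ℂ) : frob A ^ 2 = (Matrix.trace (Aᴴ * A)).re :=
  Real.sq_sqrt (trace_conjT_mul_re_nonneg A)

/-- Cauchy–Schwarz for the trace inner product, with first factor Hermitian. -/
private lemma trace_mul_re_le (A M : Matrix n n ℂ) (hA : Aᴴ = A) :
    (Matrix.trace (A * M)).re ≤ frob A * frob M := by
  have key : (Matrix.trace (Aᴴ * M)).re ≤ frob A * frob M := by
    have h1 : (Matrix.trace (Aᴴ * M)).re ≤ ∑ j, ∑ i, ‖A i j‖ * ‖M i j‖ := by
      simp only [Matrix.trace, Matrix.diag, Matrix.mul_apply, Matrix.conjTranspose_apply,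
        Complex.re_sum]
      refine Finset.sum_le_sum fun j _ => Finset.sum_le_sum fun i _ => ?_
      calc (star (A i j) * M i j).re ≤ ‖star (A i j) * M i j‖ :=
            Complex.re_le_norm _
        _ = ‖A i j‖ * ‖M i j‖ := by
            rw [norm_mul, norm_star]
    have e1 : (∑ j, ∑ i, ‖A i j‖ * ‖M i j‖)
        = ∑ x : n × n, ‖A x.2 x.1‖ * ‖M x.2 x.1‖ :=
      (Fintype.sum_prod_type (fun x : n × n => ‖A x.2 x.1‖ * ‖M x.2 x.1‖)).symm
    have e2 : (∑ j, ∑ i, ‖A i j‖ ^ 2) = ∑ x : n × n, ‖A x.2 x.1‖ ^ 2 :=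
      (Fintype.sum_prod_type (fun x : n × n => ‖A x.2 x.1‖ ^ 2)).symm
    have e3 : (∑ j, ∑ i, ‖M i j‖ ^ 2) = ∑ x : n × n, ‖M x.2 x.1‖ ^ 2 :=
      (Fintype.sum_prod_type (fun x : n × n => ‖M x.2 x.1‖ ^ 2)).symm
    have hcs := Finset.sum_mul_sq_le_sq_mul_sq Finset.univ
      (fun x : n × n => ‖A x.2 x.1‖) (fun x : n × n => ‖M x.2 x.1‖)
    have hnn : 0 ≤ ∑ x : n × n, ‖A x.2 x.1‖ * ‖M x.2 x.1‖ :=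
      Finset.sum_nonneg fun x _ => mul_nonneg (norm_nonneg _) (norm_nonneg _)
    have h2 : ∑ x : n × n, ‖A x.2 x.1‖ * ‖M x.2 x.1‖ ≤
        Real.sqrt (∑ x : n × n, ‖A x.2 x.1‖ ^ 2) *
          Real.sqrt (∑ x : n × n, ‖M x.2 x.1‖ ^ 2) := by
      calc ∑ x : n × n, ‖A x.2 x.1‖ * ‖M x.2 x.1‖
          = Real.sqrt ((∑ x : n × n, ‖A x.2 x.1‖ * ‖M x.2 x.1‖) ^ 2) :=
            (Real.sqrt_sq hnn).symm
        _ ≤ Real.sqrt ((∑ x : n × n, ‖A x.2 x.1‖ ^ 2) * ∑ x : n × n, ‖M x.2 x.1‖ ^ 2) :=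
            Real.sqrt_le_sqrt hcs
        _ = _ := Real.sqrt_mul (Finset.sum_nonneg fun x _ => sq_nonneg _) _
    calc (Matrix.trace (Aᴴ * M)).re ≤ ∑ j, ∑ i, ‖A i j‖ * ‖M i j‖ := h1
      _ = ∑ x : n × n, ‖A x.2 x.1‖ * ‖M x.2 x.1‖ := e1
      _ ≤ _ := h2
      _ = frob A * frob M := by
          rw [frob, frob, trace_conjT_mul_re, trace_conjT_mul_re, e2, e3]
  rwa [hA] at key

private lemma frob_unitary_left (U B : Matrix n n ℂ) (hU : Uᴴ * U = 1) :
    frob (U * B) = frob B := by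
  unfold frob
  congr 2
  rw [Matrix.conjTranspose_mul, Matrix.mul_assoc, ← Matrix.mul_assoc Uᴴ, hU, Matrix.one_mul]

private lemma frob_unitary_right (U B : Matrix n n ℂ) (hU : U * Uᴴ = 1) :
    frob (B * U) = frob B := by
  unfold frob
  congr 2
  have h : (B * U)ᴴ * (B * U) = Uᴴ * (Bᴴ * B) * U := by
    rw [Matrix.conjTranspose_mul]; noncomm_ring
  rw [h, Matrix.trace_mul_cycle Uᴴ (Bᴴ * B) U, hU, Matrix.one_mul]


private lemma conj_diag_mul (V : Matrix n n ℂ) (hV : Vᴴ * V = 1) (f g : n → ℂ) :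
    (V * Matrix.diagonal f * Vᴴ) * (V * Matrix.diagonal g * Vᴴ)
      = V * Matrix.diagonal (fun i => f i * g i) * Vᴴ := by
  rw [← Matrix.diagonal_mul_diagonal]
  simp only [Matrix.mul_assoc]
  rw [← Matrix.mul_assoc Vᴴ V, hV, Matrix.one_mul, ← Matrix.mul_assoc (Matrix.diagonal f)]

open scoped MatrixOrder in
private lemma msqrt_eq_sqrt (A : Matrix n n ℂ) (hA : A.PosSemidef) : msqrt A = CFC.sqrt A := by
  rw [CFC.sqrt_eq_real_sqrt A hA.nonneg, cfcₙ_eq_cfc, Matrix.IsHermitian.cfc_eq hA.1 Real.sqrt,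
    msqrt, dif_pos hA, Matrix.IsHermitian.cfc, Unitary.conjStarAlgAut_apply]
  rfl

open scoped MatrixOrder in
private lemma msqrt_props (A : Matrix n n ℂ) (hA : A.PosSemidef) :
    (msqrt A)ᴴ = msqrt A ∧ msqrt A * msqrt A = A := by
  rw [msqrt_eq_sqrt A hA]
  exact ⟨(CFC.sqrt_nonneg A).posSemidef.1, CFC.sqrt_mul_sqrt_self A hA.nonneg⟩

open scoped MatrixOrder in
private lemma msqrt_unique (A B : Matrix n n ℂ) (hA : A.PosSemidef) (hB : B.PosSemidef)
    (h : B ^ 2 = A) : msqrt A = B := by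
  rw [msqrt_eq_sqrt A hA]
  exact CFC.sqrt_unique (by rw [← h, pow_two]) hB.nonneg

end Helpers

theorem frob_sq_ge_quarter_trace_norm_sq {n : Type*} [Fintype n] [DecidableEq n]
    (rho sigma : Matrix n n ℂ) (hrho : rho.PosSemidef) (hrho1 : rho.trace = 1)
    (hsigma : sigma.PosSemidef) (hsigma1 : sigma.trace.re ≤ 1) :
    frob (msqrt rho - msqrt sigma) ^ 2 ≥ (1 / 4) * trNorm (rho - sigma) ^ 2 := by
  classical
  have hrhoH : rho.IsHermitian := hrho.1
  have hsigH : sigma.IsHermitian := hsigma.1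
  set D := rho - sigma with hDdef
  have hD : D.IsHermitian := hrhoH.sub hsigH
  set V : Matrix n n ℂ := (hD.eigenvectorUnitary : Matrix n n ℂ) with hVdef
  have hV1 : Vᴴ * V = 1 := by
    have h := (Matrix.mem_unitaryGroup_iff').mp hD.eigenvectorUnitary.2
    simpa [Matrix.star_eq_conjTranspose] using h
  have hV2 : V * Vᴴ = 1 := mul_eq_one_comm.mp hV1
  set lam : n → ℝ := hD.eigenvalues with hlam
  have hspec : D = V * Matrix.diagonal (fun i => (lam i : ℂ)) * Vᴴ := by
    have h := hD.spectral_theorem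
    simpa [Matrix.star_eq_conjTranspose, Function.comp_def, hVdef, hlam] using h
  set Dabs : Matrix n n ℂ := V * Matrix.diagonal (fun i => Complex.ofReal |lam i|) * Vᴴ with hDabs
  set U : Matrix n n ℂ :=
    V * Matrix.diagonal (fun i => (if 0 ≤ lam i then 1 else -1 : ℂ)) * Vᴴ with hUdef
  have hUD : U * D = Dabs := by
    have hfun : (fun i => (if 0 ≤ lam i then 1 else -1 : ℂ) * (lam i : ℂ))
        = fun i => Complex.ofReal |lam i| := by
      funext i
      split_ifs with h
      · rw [one_mul, abs_of_nonneg h]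
      · rw [abs_of_neg (lt_of_not_ge h)]; push_cast; ring
    rw [hUdef, hDabs, hspec, conj_diag_mul V hV1, hfun]
  have hDabsPSD : Dabs.PosSemidef := by
    rw [hDabs, ← Matrix.star_eq_conjTranspose]
    exact Matrix.PosSemidef.mul_mul_conjTranspose_same
      (Matrix.posSemidef_diagonal_iff.mpr fun i => by
        simp [Complex.zero_le_real.mpr (abs_nonneg (lam i))]) V
  have hsqD : Dabs ^ 2 = Dᴴ * D := by
    have hfun : (fun i => Complex.ofReal |lam i| * Complex.ofReal |lam i|)
        = fun i => (lam i : ℂ) * (lam i : ℂ) := by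
      funext i
      rw [← Complex.ofReal_mul, ← Complex.ofReal_mul, abs_mul_abs_self]
    rw [pow_two, hDabs, conj_diag_mul V hV1, hD.eq, hspec, conj_diag_mul V hV1, hfun]
  have hmsqrtD : msqrt (Dᴴ * D) = Dabs := by
    exact msqrt_unique _ _ (Matrix.posSemidef_conjTranspose_mul_self D) hDabsPSD hsqD
  have hUH : Uᴴ = U := by
    have hsfun : (star fun i => (if 0 ≤ lam i then 1 else -1 : ℂ))
        = fun i => (if 0 ≤ lam i then 1 else -1 : ℂ) := by
      funext i
      simp only [Pi.star_apply]
      split_ifs <;> simp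
    rw [hUdef, Matrix.conjTranspose_mul, Matrix.conjTranspose_mul,
      Matrix.conjTranspose_conjTranspose, Matrix.diagonal_conjTranspose, hsfun,
      Matrix.mul_assoc]
  have hU1 : Uᴴ * U = 1 := by
    rw [hUH, hUdef, conj_diag_mul V hV1]
    have : (fun i => (if 0 ≤ lam i then 1 else -1 : ℂ) * (if 0 ≤ lam i then 1 else -1 : ℂ))
        = fun _ => (1 : ℂ) := by
      funext i; split_ifs <;> norm_num
    rw [this, Matrix.diagonal_one, Matrix.mul_one, hV2]
  have hU2 : U * Uᴴ = 1 := mul_eq_one_comm.mp hU1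
  have htrDabs : (Matrix.trace Dabs).re = ∑ i, |lam i| := by
    rw [hDabs, Matrix.trace_mul_cycle, hV1, Matrix.one_mul, Matrix.trace_diagonal]
    rw [Complex.re_sum]
    exact Finset.sum_congr rfl fun i _ => Complex.ofReal_re _
  have htrN : trNorm D = (Matrix.trace Dabs).re := by
    rw [trNorm, hmsqrtD]
  have htrN0 : 0 ≤ trNorm D := by
    rw [htrN, htrDabs]
    exact Finset.sum_nonneg fun i _ => abs_nonneg _
  -- square roots
  have hp := msqrt_props rho hrho
  have hs := msqrt_props sigma hsigma
  have hpH : (msqrt rho)ᴴ = msqrt rho := hp.1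
  have hsH : (msqrt sigma)ᴴ = msqrt sigma := hs.1
  have hpp : msqrt rho * msqrt rho = rho := hp.2
  have hss : msqrt sigma * msqrt sigma = sigma := hs.2
  set A : Matrix n n ℂ := msqrt rho - msqrt sigma with hAdef
  set B : Matrix n n ℂ := msqrt rho + msqrt sigma with hBdef
  have hAH : Aᴴ = A := by rw [hAdef, Matrix.conjTranspose_sub, hpH, hsH]
  have hBH : Bᴴ = B := by rw [hBdef, Matrix.conjTranspose_add, hpH, hsH]
  have hABBA : A * B + B * A = D + D := by
    have expand : A * B + B * A = msqrt rho * msqrt rho + msqrt rho * msqrt rho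
        - (msqrt sigma * msqrt sigma + msqrt sigma * msqrt sigma) := by
      rw [hAdef, hBdef]; noncomm_ring
    rw [expand, hpp, hss, hDdef]
    noncomm_ring
  -- the trace-norm duality bound
  have e1 : Matrix.trace (U * (A * B)) = Matrix.trace (A * (B * U)) := by
    rw [Matrix.trace_mul_comm, Matrix.mul_assoc]
  have e2 : Matrix.trace (U * (B * A)) = Matrix.trace (A * (U * B)) := by
    rw [← Matrix.mul_assoc, Matrix.trace_mul_comm]
  have etr : Matrix.trace (U * D) + Matrix.trace (U * D)
      = Matrix.trace (A * (B * U)) + Matrix.trace (A * (U * B)) := by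
    rw [← e1, ← e2, ← Matrix.trace_add, ← Matrix.trace_add, ← Matrix.mul_add,
      ← Matrix.mul_add, hABBA]
  have hb1 : (Matrix.trace (A * (B * U))).re ≤ frob A * frob B := by
    calc (Matrix.trace (A * (B * U))).re ≤ frob A * frob (B * U) :=
          trace_mul_re_le A (B * U) hAH
      _ = frob A * frob B := by rw [frob_unitary_right U B hU2]
  have hb2 : (Matrix.trace (A * (U * B))).re ≤ frob A * frob B := by
    calc (Matrix.trace (A * (U * B))).re ≤ frob A * frob (U * B) :=
          trace_mul_re_le A (U * B) hAH
      _ = frob A * frob B := by rw [frob_unitary_left U B hU1]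
  have hdual : trNorm D ≤ frob A * frob B := by
    have h := congrArg Complex.re etr
    simp only [Complex.add_re] at h
    have : (Matrix.trace (U * D)).re + (Matrix.trace (U * D)).re ≤
        frob A * frob B + frob A * frob B := h ▸ add_le_add hb1 hb2
    have hUDre : (Matrix.trace (U * D)).re = trNorm D := by rw [hUD, htrN]
    linarith [this, hUDre ▸ this]
  -- bound on frob B
  have hsum : B * B + A * A = (rho + rho) + (sigma + sigma) := by
    have expand : B * B + A * A = (msqrt rho * msqrt rho + msqrt rho * msqrt rho)
        + (msqrt sigma * msqrt sigma + msqrt sigma * msqrt sigma) := by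
      rw [hAdef, hBdef]; noncomm_ring
    rw [expand, hpp, hss]
  have htrA2 : 0 ≤ (Matrix.trace (A * A)).re := by
    have := trace_conjT_mul_re_nonneg A
    rwa [hAH] at this
  have htrB2 : (Matrix.trace (B * B)).re ≤ 4 := by
    have h := congrArg (fun M => (Matrix.trace M).re) hsum
    simp only [Matrix.trace_add, Complex.add_re] at h
    have hr : (Matrix.trace rho).re = 1 := by rw [hrho1]; simp
    linarith [h, htrA2, hsigma1]
  have hfB : frob B ≤ 2 := by
    have h : frob B ^ 2 ≤ 4 := by
      rw [frob_sq, hBH]; exact htrB2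
    nlinarith [frob_nonneg B]
  have hfA : 0 ≤ frob A := frob_nonneg A
  have hfB0 : 0 ≤ frob B := frob_nonneg B
  have hfinal : trNorm D ≤ 2 * frob A := by
    calc trNorm D ≤ frob A * frob B := hdual
      _ ≤ frob A * 2 := by nlinarith
      _ = 2 * frob A := by ring
  nlinarith [htrN0, hfinal, hfA]
end
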